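/- If a is a positive non-integer dyadic rational in canonical form, then l(a^R) ≤ l(a), where l denotes left-length; symmetrically, if a is a negative non-integer dyadic rational, then r(a^L) ≤ r(a). -/

import Mathlib

namespace SetTheory

section PGameDefs

universe u

/-- The old Mathlib `SetTheory.PGame` (removed from Mathlib), reproduced verbatim. -/
inductive PGame : Type (u + 1)
  | mk : ∀ α β : Type u, (α → PGame) → (β → PGame) → PGame

namespace PGame

def LeftMoves : PGame → Type u
  | mk l _ _ _ => l

def RightMoves : PGame → Type u
  | mk _ r _ _ => r

def moveLeft : ∀ g : PGame, LeftMoves g → PGame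
  | mk _l _ L _ => L

def moveRight : ∀ g : PGame, RightMoves g → PGame
  | mk _ _r _ R => R

inductive IsOption : PGame → PGame → Prop
  | moveLeft {x : PGame} (i : x.LeftMoves) : IsOption (x.moveLeft i) x
  | moveRight {x : PGame} (i : x.RightMoves) : IsOption (x.moveRight i) x

instance : Zero PGame :=
  ⟨⟨PEmpty, PEmpty, PEmpty.elim, PEmpty.elim⟩⟩

def neg : PGame → PGame
  | ⟨l, r, L, R⟩ => ⟨r, l, fun i => neg (R i), fun i => neg (L i)⟩

instance : Neg PGame :=
  ⟨neg⟩

noncomputable instance : Add PGame.{u} where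
  add x y := by
    induction x generalizing y with | mk xl xr _ _ IHxl IHxr => _
    induction y with | mk yl yr yL yR IHyl IHyr => _
    have y := mk yl yr yL yR
    refine ⟨xl ⊕ yl, xr ⊕ yr, Sum.rec ?_ ?_, Sum.rec ?_ ?_⟩
    · exact fun i => IHxl i y
    · exact IHyl
    · exact fun i => IHxr i y
    · exact @IHyr

end PGame

end PGameDefs

end SetTheory

open SetTheory

namespace Misere

/-- `F` is a follower of `G`: reachable from `G` by a (possibly empty) sequence of moves. -/
def Follower (F G : PGame) : Prop := Relation.ReflTransGen PGame.IsOption F G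

def IsLeftEnd (G : PGame) : Prop := IsEmpty G.LeftMoves
def IsRightEnd (G : PGame) : Prop := IsEmpty G.RightMoves

/-- A dead left end: every follower (including itself) is a left end. -/
def DeadLeftEnd (G : PGame) : Prop := ∀ F, Follower F G → IsLeftEnd F
def DeadRightEnd (G : PGame) : Prop := ∀ F, Follower F G → IsRightEnd F
def DeadEnd (G : PGame) : Prop := DeadLeftEnd G ∨ DeadRightEnd G

/-- A game is dead-ending if every end follower is a dead end. -/
def DeadEnding (G : PGame) : Prop :=
  ∀ F, Follower F G → (IsLeftEnd F → DeadLeftEnd F) ∧ (IsRightEnd F → DeadRightEnd F)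

/-- The universe of dead-ending games. -/
def E : Set PGame := {G | DeadEnding G}

/-- `(misereWins G).1` : Left, moving first, wins `G` under misère play;
    `(misereWins G).2` : Right, moving first, wins `G` under misère play. -/
def misereWins : PGame → Prop × Prop
  | PGame.mk l r L R =>
      (IsEmpty l ∨ ∃ i, ¬ (misereWins (L i)).2,
       IsEmpty r ∨ ∃ j, ¬ (misereWins (R j)).1)

def LeftWinsGF (G : PGame) : Prop := (misereWins G).1
def RightWinsGF (G : PGame) : Prop := (misereWins G).2

inductive MOutcome : Type
  | L | N | P | R
deriving DecidableEq

/-- Partial order on misère outcomes: `R` minimal, `L` maximal, `N` and `P` incomparable. -/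
def MOutcome.le : MOutcome → MOutcome → Prop
  | .R, _ => True
  | _, .L => True
  | a, b => a = b

instance : LE MOutcome := ⟨MOutcome.le⟩

/-- The misère outcome of a game. -/
noncomputable def outcome (G : PGame) : MOutcome := by
  classical
  exact if LeftWinsGF G then (if RightWinsGF G then .N else .L)
        else (if RightWinsGF G then .R else .P)

/-- `G ≡ H (mod U)`. -/
def equivMod (U : Set PGame) (G H : PGame) : Prop :=
  ∀ X ∈ U, outcome (G + X) = outcome (H + X)

/-- `G ≧ H (mod U)`. -/
def geMod (U : Set PGame) (G H : PGame) : Prop :=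
  ∀ X ∈ U, outcome (H + X) ≤ outcome (G + X)

/-- `LeftChain G n`: there is a sequence of `n` consecutive Left moves from `G`
ending at the zero position. -/
inductive LeftChain : PGame → ℕ → Prop
  | zero (G : PGame) : IsLeftEnd G → IsRightEnd G → LeftChain G 0
  | succ (G : PGame) (i : G.LeftMoves) (n : ℕ) :
      LeftChain (G.moveLeft i) n → LeftChain G (n + 1)

inductive RightChain : PGame → ℕ → Prop
  | zero (G : PGame) : IsLeftEnd G → IsRightEnd G → RightChain G 0
  | succ (G : PGame) (j : G.RightMoves) (n : ℕ) :
      RightChain (G.moveRight j) n → RightChain G (n + 1)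

/-- Left-length: minimum number of consecutive Left moves needed to reach zero. -/
noncomputable def leftLength (G : PGame) : ℕ := sInf {n | LeftChain G n}

/-- Right-length: minimum number of consecutive Right moves needed to reach zero. -/
noncomputable def rightLength (G : PGame) : ℕ := sInf {n | RightChain G n}

/-- Normal-play canonical form of a nonnegative integer. -/
def natGame : ℕ → PGame
  | 0 => 0
  | n + 1 => PGame.mk PUnit PEmpty (fun _ => natGame n) PEmpty.elim

/-- Normal-play canonical form of an integer (negatives are conjugates). -/
def intGame (n : ℤ) : PGame :=
  if 0 ≤ n then natGame n.toNat else -natGame (-n).toNat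

/-- Normal-play canonical form of the dyadic rational `m / 2 ^ j`. -/
def dyadicGame : ℤ → ℕ → PGame
  | m, 0 => intGame m
  | m, j + 1 =>
      if m % 2 = 0 then dyadicGame (m / 2) j
      else PGame.mk PUnit PUnit (fun _ => dyadicGame ((m - 1) / 2) j)
            (fun _ => dyadicGame ((m + 1) / 2) j)

/-- The closure of dead ends: finite disjunctive sums of dead ends. -/
def DeadEndClosure : Set PGame :=
  {G | ∃ l : List PGame, (∀ x ∈ l, DeadEnd x) ∧ G = l.sum}

end Misere

open Misere SetTheory PGame



namespace Misere

universe u v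

lemma leftChain_natGame : ∀ n, LeftChain (natGame.{u} n) n
  | 0 => LeftChain.zero _ ⟨fun x => (x : PEmpty).elim⟩ ⟨fun x => (x : PEmpty).elim⟩
  | n+1 => LeftChain.succ _ (by exact PUnit.unit) n (leftChain_natGame n)

lemma rightChain_negNatGame : ∀ n, RightChain (-natGame.{u} n) n
  | 0 => RightChain.zero _ ⟨fun x => (x : PEmpty).elim⟩ ⟨fun x => (x : PEmpty).elim⟩
  | n+1 => RightChain.succ _ (by exact PUnit.unit) n (rightChain_negNatGame n)

lemma exists_leftChain : ∀ (j : ℕ) (k : ℤ), 0 ≤ k → ∃ n, LeftChain (dyadicGame.{u} k j) n := by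
  intro j
  induction j with
  | zero =>
    intro k hk
    rw [dyadicGame, intGame, if_pos hk]
    exact ⟨k.toNat, leftChain_natGame k.toNat⟩
  | succ j ih =>
    intro k hk
    by_cases h : k % 2 = 0
    · rw [dyadicGame, if_pos h]
      exact ih _ (by omega)
    · obtain ⟨n, hn⟩ := ih ((k-1)/2) (by omega)
      rw [dyadicGame, if_neg h]
      exact ⟨n+1, LeftChain.succ _ (by exact PUnit.unit) n hn⟩

lemma exists_rightChain : ∀ (j : ℕ) (k : ℤ), k ≤ 0 → ∃ n, RightChain (dyadicGame.{u} k j) n := by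
  intro j
  induction j with
  | zero =>
    intro k hk
    rcases lt_or_eq_of_le hk with h | h
    · rw [dyadicGame, intGame, if_neg (by omega)]
      exact ⟨(-k).toNat, rightChain_negNatGame _⟩
    · subst h
      rw [dyadicGame, intGame, if_pos le_rfl]
      exact ⟨0, RightChain.zero _ ⟨fun x => (x : PEmpty).elim⟩ ⟨fun x => (x : PEmpty).elim⟩⟩
  | succ j ih =>
    intro k hk
    by_cases h : k % 2 = 0
    · rw [dyadicGame, if_pos h]
      exact ih _ (by omega)
    · obtain ⟨n, hn⟩ := ih ((k+1)/2) (by omega)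
      rw [dyadicGame, if_neg h]
      exact ⟨n+1, RightChain.succ _ (by exact PUnit.unit) n hn⟩

lemma leftChain_shift : ∀ (j : ℕ) (k : ℤ), 0 ≤ k → ∀ n, LeftChain (dyadicGame.{u} k j) n →
    ∃ n' ≤ n + 1, LeftChain (dyadicGame.{u} (k+1) j) n' := by
  intro j
  induction j with
  | zero =>
    intro k hk n hn
    rw [dyadicGame, intGame, if_pos hk] at hn
    refine ⟨n+1, le_rfl, ?_⟩
    rw [dyadicGame, intGame, if_pos (by omega), show (k+1).toNat = k.toNat + 1 from by omega]
    exact LeftChain.succ _ (by exact PUnit.unit) n hn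
  | succ j ih =>
    intro k hk n hn
    by_cases h : k % 2 = 0
    · rw [dyadicGame, if_pos h] at hn
      refine ⟨n+1, le_rfl, ?_⟩
      rw [dyadicGame, if_neg (by omega : ¬ (k+1) % 2 = 0)]
      refine LeftChain.succ _ (by exact PUnit.unit) n ?_
      show LeftChain (dyadicGame ((k+1-1)/2) j) n
      rw [show ((k:ℤ)+1-1)/2 = k/2 from by omega]
      exact hn
    · rw [dyadicGame, if_neg h] at hn
      cases hn with
      | zero _ h1 h2 => exact (h1.false PUnit.unit).elim
      | succ _ i t ht =>
        obtain ⟨n', hle, hc⟩ := ih ((k-1)/2) (by omega) t ht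
        refine ⟨n', by omega, ?_⟩
        rw [dyadicGame, if_pos (by omega : (k+1) % 2 = 0)]
        rw [show ((k:ℤ)-1)/2 + 1 = (k+1)/2 from by omega] at hc
        exact hc

lemma rightChain_shift : ∀ (j : ℕ) (k : ℤ), k ≤ 0 → ∀ n, RightChain (dyadicGame.{u} k j) n →
    ∃ n' ≤ n + 1, RightChain (dyadicGame.{u} (k-1) j) n' := by
  intro j
  induction j with
  | zero =>
    intro k hk n hn
    rcases lt_or_eq_of_le hk with h | h
    · rw [dyadicGame, intGame, if_neg (by omega)] at hn
      refine ⟨n+1, le_rfl, ?_⟩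
      rw [dyadicGame, intGame, if_neg (by omega),
        show (-(k-1)).toNat = (-k).toNat + 1 from by omega]
      exact RightChain.succ _ (by exact PUnit.unit) n hn
    · subst h
      refine ⟨1, by omega, ?_⟩
      rw [dyadicGame, intGame, if_neg (by omega), show (-((0:ℤ)-1)).toNat = 1 from by omega]
      exact RightChain.succ _ (by exact PUnit.unit) 0 (rightChain_negNatGame 0)
  | succ j ih =>
    intro k hk n hn
    by_cases h : k % 2 = 0
    · rw [dyadicGame, if_pos h] at hn
      refine ⟨n+1, le_rfl, ?_⟩
      rw [dyadicGame, if_neg (by omega : ¬ (k-1) % 2 = 0)]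
      refine RightChain.succ _ (by exact PUnit.unit) n ?_
      show RightChain (dyadicGame ((k-1+1)/2) j) n
      rw [show ((k:ℤ)-1+1)/2 = k/2 from by omega]
      exact hn
    · rw [dyadicGame, if_neg h] at hn
      cases hn with
      | zero _ h1 h2 => exact (h2.false PUnit.unit).elim
      | succ _ i t ht =>
        obtain ⟨n', hle, hc⟩ := ih ((k+1)/2) (by omega) t ht
        refine ⟨n', by omega, ?_⟩
        rw [dyadicGame, if_pos (by omega : (k-1) % 2 = 0)]
        rw [show ((k:ℤ)+1)/2 - 1 = (k-1)/2 from by omega] at hc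
        exact hc


lemma leftChain_natGame_transfer : ∀ (t n : ℕ),
    LeftChain (natGame.{v} t) n → LeftChain (natGame.{u} t) n := by
  intro t
  induction t with
  | zero =>
    intro n hn
    cases hn with
    | zero _ h1 h2 =>
      exact LeftChain.zero _ ⟨fun x => (x : PEmpty).elim⟩ ⟨fun x => (x : PEmpty).elim⟩
    | succ _ i s hs => exact (i : PEmpty).elim
  | succ t ih =>
    intro n hn
    cases hn with
    | zero _ h1 h2 => exact (h1.false PUnit.unit).elim
    | succ _ i s hs => exact LeftChain.succ _ (by exact PUnit.unit) s (ih s hs)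

lemma rightChain_negNatGame_transfer : ∀ (t n : ℕ),
    RightChain (-natGame.{v} t) n → RightChain (-natGame.{u} t) n := by
  intro t
  induction t with
  | zero =>
    intro n hn
    cases hn with
    | zero _ h1 h2 =>
      exact RightChain.zero _ ⟨fun x => (x : PEmpty).elim⟩ ⟨fun x => (x : PEmpty).elim⟩
    | succ _ i s hs => exact (i : PEmpty).elim
  | succ t ih =>
    intro n hn
    cases hn with
    | zero _ h1 h2 => exact (h2.false PUnit.unit).elim
    | succ _ i s hs => exact RightChain.succ _ (by exact PUnit.unit) s (ih s hs)

lemma leftChain_transfer : ∀ (j : ℕ) (k : ℤ), 0 ≤ k → ∀ n,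
    LeftChain (dyadicGame.{v} k j) n → LeftChain (dyadicGame.{u} k j) n := by
  intro j
  induction j with
  | zero =>
    intro k hk n hn
    rw [dyadicGame, intGame, if_pos hk] at hn ⊢
    exact leftChain_natGame_transfer _ _ hn
  | succ j ih =>
    intro k hk n hn
    by_cases h : k % 2 = 0
    · rw [dyadicGame, if_pos h] at hn ⊢
      exact ih _ (by omega) n hn
    · rw [dyadicGame, if_neg h] at hn ⊢
      cases hn with
      | zero _ h1 h2 => exact (h1.false PUnit.unit).elim
      | succ _ i t ht => exact LeftChain.succ _ (by exact PUnit.unit) t (ih ((k-1)/2) (by omega) t ht)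

lemma rightChain_transfer : ∀ (j : ℕ) (k : ℤ), k ≤ 0 → ∀ n,
    RightChain (dyadicGame.{v} k j) n → RightChain (dyadicGame.{u} k j) n := by
  intro j
  induction j with
  | zero =>
    intro k hk n hn
    rcases lt_or_eq_of_le hk with h | h
    · rw [dyadicGame, intGame, if_neg (by omega)] at hn ⊢
      exact rightChain_negNatGame_transfer _ _ hn
    · subst h
      rw [dyadicGame, intGame, if_pos le_rfl] at hn ⊢
      cases hn with
      | zero _ h1 h2 =>
        exact RightChain.zero _ ⟨fun x => (x : PEmpty).elim⟩ ⟨fun x => (x : PEmpty).elim⟩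
      | succ _ i s hs => exact (i : PEmpty).elim
  | succ j ih =>
    intro k hk n hn
    by_cases h : k % 2 = 0
    · rw [dyadicGame, if_pos h] at hn ⊢
      exact ih _ (by omega) n hn
    · rw [dyadicGame, if_neg h] at hn ⊢
      cases hn with
      | zero _ h1 h2 => exact (h2.false PUnit.unit).elim
      | succ _ i t ht => exact RightChain.succ _ (by exact PUnit.unit) t (ih ((k+1)/2) (by omega) t ht)

lemma left_main (m : ℤ) (j : ℕ) (hm1 : m % 2 = 1) (hm : 0 < m) :
    ∀ ir : (dyadicGame.{v} m (j+1)).RightMoves,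
      leftLength ((dyadicGame.{v} m (j+1)).moveRight ir)
        ≤ leftLength (dyadicGame.{u} m (j+1)) := by
  have hG : dyadicGame.{u} m (j+1) = PGame.mk PUnit.{u+1} PUnit.{u+1}
      (fun _ => dyadicGame.{u} ((m-1)/2) j) (fun _ => dyadicGame.{u} ((m+1)/2) j) := by
    rw [dyadicGame, if_neg (by omega)]
  have hGv : dyadicGame.{v} m (j+1) = PGame.mk PUnit.{v+1} PUnit.{v+1}
      (fun _ => dyadicGame.{v} ((m-1)/2) j) (fun _ => dyadicGame.{v} ((m+1)/2) j) := by
    rw [dyadicGame, if_neg (by omega)]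
  rw [hG, hGv]
  intro ir
  have hne : Set.Nonempty {n | LeftChain (PGame.mk PUnit.{u+1} PUnit.{u+1}
      (fun _ => dyadicGame.{u} ((m-1)/2) j) (fun _ => dyadicGame.{u} ((m+1)/2) j)) n} := by
    obtain ⟨t, ht⟩ := exists_leftChain.{u} j ((m-1)/2) (by omega)
    exact ⟨t+1, LeftChain.succ _ (by exact PUnit.unit) t ht⟩
  have hmem : LeftChain (PGame.mk PUnit.{u+1} PUnit.{u+1}
      (fun _ => dyadicGame.{u} ((m-1)/2) j) (fun _ => dyadicGame.{u} ((m+1)/2) j))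
      (leftLength (PGame.mk PUnit.{u+1} PUnit.{u+1}
      (fun _ => dyadicGame.{u} ((m-1)/2) j) (fun _ => dyadicGame.{u} ((m+1)/2) j))) :=
    Nat.sInf_mem hne
  obtain ⟨N, hN⟩ : ∃ N, leftLength (PGame.mk PUnit.{u+1} PUnit.{u+1}
      (fun _ => dyadicGame.{u} ((m-1)/2) j) (fun _ => dyadicGame.{u} ((m+1)/2) j)) = N :=
    ⟨_, rfl⟩
  rw [hN] at hmem ⊢
  cases hmem with
  | zero _ h1 h2 => exact (h1.false PUnit.unit).elim
  | succ _ i t ht =>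
    obtain ⟨n', hle, hc⟩ := leftChain_shift.{u} j ((m-1)/2) (by omega) t ht
    rw [show (m-1)/2 + 1 = (m+1)/2 from by omega] at hc
    exact le_trans (Nat.sInf_le (leftChain_transfer.{v,u} j ((m+1)/2) (by omega) n' hc)) hle

lemma right_main (m : ℤ) (j : ℕ) (hm1 : m % 2 = 1) (hm : m < 0) :
    ∀ il : (dyadicGame.{v} m (j+1)).LeftMoves,
      rightLength ((dyadicGame.{v} m (j+1)).moveLeft il)
        ≤ rightLength (dyadicGame.{u} m (j+1)) := by
  have hG : dyadicGame.{u} m (j+1) = PGame.mk PUnit.{u+1} PUnit.{u+1}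
      (fun _ => dyadicGame.{u} ((m-1)/2) j) (fun _ => dyadicGame.{u} ((m+1)/2) j) := by
    rw [dyadicGame, if_neg (by omega)]
  have hGv : dyadicGame.{v} m (j+1) = PGame.mk PUnit.{v+1} PUnit.{v+1}
      (fun _ => dyadicGame.{v} ((m-1)/2) j) (fun _ => dyadicGame.{v} ((m+1)/2) j) := by
    rw [dyadicGame, if_neg (by omega)]
  rw [hG, hGv]
  intro il
  have hne : Set.Nonempty {n | RightChain (PGame.mk PUnit.{u+1} PUnit.{u+1}
      (fun _ => dyadicGame.{u} ((m-1)/2) j) (fun _ => dyadicGame.{u} ((m+1)/2) j)) n} := by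
    obtain ⟨t, ht⟩ := exists_rightChain.{u} j ((m+1)/2) (by omega)
    exact ⟨t+1, RightChain.succ _ (by exact PUnit.unit) t ht⟩
  have hmem : RightChain (PGame.mk PUnit.{u+1} PUnit.{u+1}
      (fun _ => dyadicGame.{u} ((m-1)/2) j) (fun _ => dyadicGame.{u} ((m+1)/2) j))
      (rightLength (PGame.mk PUnit.{u+1} PUnit.{u+1}
      (fun _ => dyadicGame.{u} ((m-1)/2) j) (fun _ => dyadicGame.{u} ((m+1)/2) j))) :=
    Nat.sInf_mem hne
  obtain ⟨N, hN⟩ : ∃ N, rightLength (PGame.mk PUnit.{u+1} PUnit.{u+1}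
      (fun _ => dyadicGame.{u} ((m-1)/2) j) (fun _ => dyadicGame.{u} ((m+1)/2) j)) = N :=
    ⟨_, rfl⟩
  rw [hN] at hmem ⊢
  cases hmem with
  | zero _ h1 h2 => exact (h2.false PUnit.unit).elim
  | succ _ i t ht =>
    obtain ⟨n', hle, hc⟩ := rightChain_shift.{u} j ((m+1)/2) (by omega) t ht
    rw [show (m+1)/2 - 1 = (m-1)/2 from by omega] at hc
    exact le_trans (Nat.sInf_le (rightChain_transfer.{v,u} j ((m-1)/2) (by omega) n' hc)) hle

end Misere

open Misere SetTheory PGame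

/-- for a positive non-integer canonical dyadic a, l(a^R) ≤ l(a);
for a negative one, r(a^L) ≤ r(a). -/
theorem stmt12 (m : ℤ) (j : ℕ) (hodd : Odd m) (hj : 0 < j) :
    (0 < m → ∀ ir : (dyadicGame m j).RightMoves,
      leftLength ((dyadicGame m j).moveRight ir) ≤ leftLength (dyadicGame m j)) ∧
    (m < 0 → ∀ il : (dyadicGame m j).LeftMoves,
      rightLength ((dyadicGame m j).moveLeft il) ≤ rightLength (dyadicGame m j)) := by
  have hm1 : m % 2 = 1 := Int.odd_iff.mp hodd
  obtain ⟨j, rfl⟩ : ∃ j', j = j' + 1 := ⟨j-1, by omega⟩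
  exact ⟨fun hm => left_main m j hm1 hm, fun hm => right_main m j hm1 hm⟩
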